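/- Every finitely generated residually finite group is Hopfian. -/

import Mathlib

/-- A group is residually finite if every nontrivial element survives in some
finite quotient. -/
def ResiduallyFinite (G : Type*) [Group G] : Prop :=
  ∀ g : G, g ≠ 1 → ∃ (F : Type) (_ : Group F), Finite F ∧
    ∃ φ : G →* F, φ g ≠ 1

lemma finite_hom_aux {G F : Type*} [Group G] [Group F] (hfg : Group.FG G) [Finite F] :
    Finite (G →* F) := by
  obtain ⟨S, hS⟩ := hfg.out
  have : Function.Injective (fun f : G →* F => (fun s : S => f s.1)) := by
    intro f g h
    exact MonoidHom.eq_of_eqOn_dense hS (fun x hx => congrFun h ⟨x, hx⟩)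
  exact Finite.of_injective _ this

theorem stmt_15 {G : Type*} [Group G] (hfg : Group.FG G)
    (hrf : ResiduallyFinite G) :
    ∀ f : G →* G, Function.Surjective f → Function.Injective f := by
  intro f hsurj
  rw [← MonoidHom.ker_eq_bot_iff, eq_bot_iff]
  intro g hg
  have hg' : f g = 1 := hg
  simp only [Subgroup.mem_bot]
  by_contra hg1
  obtain ⟨F, _, hFfin, φ, hφ⟩ := hrf g hg1
  have : Finite (G →* F) := finite_hom_aux hfg
  set e : Monoid.End G := f with he
  obtain ⟨m, n, hne, hmn⟩ := Finite.exists_ne_map_eq_of_infinite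
    (fun n : ℕ => φ.comp ((e^n : Monoid.End G) : G →* G))
  wlog hlt : m < n generalizing m n
  · exact this n m hne.symm hmn.symm (by omega)
  have hsurjm : ∀ k : ℕ, Function.Surjective ((e^k : Monoid.End G) : G → G) := by
    intro k
    induction k with
    | zero => simpa using Function.surjective_id
    | succ j ih =>
        intro y
        obtain ⟨z, hz⟩ := ih y
        obtain ⟨w, hw⟩ := hsurj z
        exact ⟨w, by rw [pow_succ]; show (e^j) (e w) = y; exact (congrArg (fun t => (e^j) t) hw).trans hz⟩
  have hfg1 : ∀ k : ℕ, 1 ≤ k → (e^k : Monoid.End G) g = 1 := by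
    intro k hk
    obtain ⟨j, rfl⟩ : ∃ j, k = j + 1 := ⟨k - 1, by omega⟩
    rw [pow_succ]
    show (e^j) (e g) = 1
    have : e g = 1 := hg'
    rw [this, map_one]
  obtain ⟨x, hx⟩ := hsurjm m g
  have key : φ ((e^m : Monoid.End G) x) = φ ((e^n : Monoid.End G) x) :=
    congrFun (congrArg (fun ψ : G →* F => (ψ : G → F)) hmn) x
  have hnx : (e^n : Monoid.End G) x = (e^(n-m) : Monoid.End G) g := by
    rw [← hx]
    show (e^n) x = (e^(n-m) * e^m) x
    rw [← pow_add]
    congr 2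
    omega
  rw [hx, hnx, hfg1 (n - m) (by omega), map_one] at key
  exact hφ key
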